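/- Let u ∈ M be nonzero and 0 ≠ h ∈ ℂ[u^⊥ ∩ N]. For f ∈ ℂ[N], write f = Σ_{k ∈ ℤ} f_k, where f_k is the part of f supported on {n ∈ N : ⟨u,n⟩ = k} (a finite sum). Then f is mutable with respect to (u,h) — i.e. μ^♯_{u,h}(f) ∈ ℂ[N] — if and only if for every k > 0, h^k divides f_{-k} in ℂ[N]. -/

import Mathlib

/-- The Laurent polynomial ring `ℂ[N]` for `N = ℤ^d`, realized as the group algebra. -/
abbrev LaurentAlg (d : ℕ) : Type := AddMonoidAlgebra ℂ (Fin d → ℤ)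

/-- The fraction field `ℂ(N)` of the Laurent polynomial ring. -/
abbrev LaurentField (d : ℕ) : Type := FractionRing (LaurentAlg d)

/-- `φ : ℂ[N] → ℂ(N)` is the mutation homomorphism `μ^♯_{u,h}` iff it sends each
monomial `x^n` to `x^n · h^{⟨u,n⟩}`. -/
def IsMutationHom {d : ℕ} (u : (Fin d → ℤ) →+ ℤ) (h : LaurentAlg d)
    (φ : LaurentAlg d →ₐ[ℂ] LaurentField d) : Prop :=
  ∀ n : Fin d → ℤ,
    φ (AddMonoidAlgebra.single n (1 : ℂ)) =
      algebraMap (LaurentAlg d) (LaurentField d) (AddMonoidAlgebra.single n (1 : ℂ)) *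
        (algebraMap (LaurentAlg d) (LaurentField d) h) ^ (u n)

/-- `Φ : ℂ(N) → ℂ(N)` extends the mutation `μ^♯_{u,h}` iff it sends each
monomial `x^n` (viewed in the fraction field) to `x^n · h^{⟨u,n⟩}`. -/
def IsMutationFieldHom {d : ℕ} (u : (Fin d → ℤ) →+ ℤ) (h : LaurentAlg d)
    (Φ : LaurentField d →+* LaurentField d) : Prop :=
  ∀ n : Fin d → ℤ,
    Φ (algebraMap (LaurentAlg d) (LaurentField d) (AddMonoidAlgebra.single n (1 : ℂ))) =
      algebraMap (LaurentAlg d) (LaurentField d) (AddMonoidAlgebra.single n (1 : ℂ)) *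
        (algebraMap (LaurentAlg d) (LaurentField d) h) ^ (u n)


section Aux

variable {d : ℕ} (u : (Fin d → ℤ) →+ ℤ)

/-- The degree-`k` graded part of `f` with respect to `u`. -/
noncomputable def gpart (k : ℤ) (f : LaurentAlg d) : LaurentAlg d :=
  AddMonoidAlgebra.ofCoeff (Finsupp.filter (fun n => u n = k) f.coeff)

lemma gpart_apply (k : ℤ) (f : LaurentAlg d) (n : Fin d → ℤ) :
    (gpart u k f).coeff n = if u n = k then f.coeff n else 0 :=
  Finsupp.filter_apply _ f.coeff n

lemma gpart_add (k : ℤ) (f g : LaurentAlg d) :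
    gpart u k (f + g) = gpart u k f + gpart u k g :=
  congrArg AddMonoidAlgebra.ofCoeff Finsupp.filter_add

lemma gpart_zero (k : ℤ) : gpart u k (0 : LaurentAlg d) = 0 := by
  ext n; rw [gpart_apply]; simp

lemma gpart_support (k : ℤ) (f : LaurentAlg d) :
    (gpart u k f).coeff.support = f.coeff.support.filter (fun n => u n = k) :=
  Finsupp.support_filter _ f.coeff

lemma gpart_sum {β : Type*} (k : ℤ) (s : Finset β) (F : β → LaurentAlg d) :
    gpart u k (∑ i ∈ s, F i) = ∑ i ∈ s, gpart u k (F i) := by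
  classical
  induction s using Finset.induction_on with
  | empty => simp [gpart_zero]
  | insert _ _ hx ih =>
    rw [Finset.sum_insert hx, gpart_add, ih, Finset.sum_insert hx]

lemma gpart_single_pos (k : ℤ) (n : Fin d → ℤ) (c : ℂ) (hn : u n = k) :
    gpart u k (AddMonoidAlgebra.single n c) = AddMonoidAlgebra.single n c :=
  congrArg AddMonoidAlgebra.ofCoeff (Finsupp.filter_single_of_pos _ hn)

lemma gpart_single_neg (k : ℤ) (n : Fin d → ℤ) (c : ℂ) (hn : ¬ u n = k) :
    gpart u k (AddMonoidAlgebra.single n c) = 0 :=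
  congrArg AddMonoidAlgebra.ofCoeff (Finsupp.filter_single_of_neg _ hn)

lemma gpart_eq_sum (k : ℤ) (f : LaurentAlg d) :
    gpart u k f = ∑ n ∈ f.coeff.support.filter (fun n => u n = k),
      AddMonoidAlgebra.single n (f.coeff n) := by
  rw [gpart, Finsupp.filter_eq_sum, AddMonoidAlgebra.ofCoeff_sum]; rfl

lemma gpart_eq_self_of_homog {j : ℤ} {g : LaurentAlg d}
    (hg : ∀ n ∈ g.coeff.support, u n = j) :
    gpart u j g = g := by
  ext n
  rw [gpart_apply]
  split_ifs with hn
  · rfl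
  · by_contra hc
    exact hn (hg n (Finsupp.mem_support_iff.mpr fun h0 => hc h0.symm))

lemma gpart_eq_zero_of_homog {j k : ℤ} (hjk : j ≠ k) {g : LaurentAlg d}
    (hg : ∀ n ∈ g.coeff.support, u n = j) :
    gpart u k g = 0 := by
  ext n
  rw [gpart_apply]
  split_ifs with hn
  · by_contra hc
    exact hjk ((hg n (Finsupp.mem_support_iff.mpr fun h0 => hc h0)).symm.trans hn)
  · rfl

lemma support_mul_homog {j k : ℤ} {g f : LaurentAlg d}
    (hg : ∀ n ∈ g.coeff.support, u n = j) (hf : ∀ n ∈ f.coeff.support, u n = k) :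
    ∀ n ∈ (g * f).coeff.support, u n = j + k := by
  classical
  intro n hn
  obtain ⟨a, ha, b, hb, rfl⟩ := Finset.mem_add.mp (AddMonoidAlgebra.support_coeff_mul_subset g f hn)
  rw [map_add, hg a ha, hf b hb]

lemma support_pow_homog {h : LaurentAlg d} (hsupp : ∀ n ∈ h.coeff.support, u n = 0) (m : ℕ) :
    ∀ n ∈ (h ^ m).coeff.support, u n = 0 := by
  induction m with
  | zero =>
    intro n hn
    rw [pow_zero, AddMonoidAlgebra.one_def] at hn
    have := Finsupp.support_single_subset hn
    simp only [Finset.mem_singleton] at this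
    rw [this, map_zero]
  | succ m ih =>
    rw [pow_succ]
    exact fun n hn => support_mul_homog u ih hsupp n hn

lemma gpart_single_mul (k : ℤ) (m : Fin d → ℤ) (hm : u m = 0) (c : ℂ) (f : LaurentAlg d) :
    gpart u k (AddMonoidAlgebra.single m c * f)
      = AddMonoidAlgebra.single m c * gpart u k f := by
  induction f using AddMonoidAlgebra.induction_linear with
  | zero => rw [mul_zero, gpart_zero, mul_zero]
  | add f g hf hg =>
    rw [mul_add, gpart_add, gpart_add, mul_add, hf, hg]
  | single n b =>
    show gpart u k (AddMonoidAlgebra.single m c * AddMonoidAlgebra.single n b)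
      = AddMonoidAlgebra.single m c * gpart u k (AddMonoidAlgebra.single n b)
    rw [AddMonoidAlgebra.single_mul_single]
    by_cases hk : u n = k
    · rw [gpart_single_pos u k n b hk,
        gpart_single_pos u k (m + n) _ (by rw [map_add, hm, hk, zero_add]),
        AddMonoidAlgebra.single_mul_single]
    · rw [gpart_single_neg u k n b hk,
        gpart_single_neg u k (m + n) _ (by rw [map_add, hm, zero_add]; exact hk), mul_zero]

lemma gpart_mul (k : ℤ) {g : LaurentAlg d} (hg : ∀ n ∈ g.coeff.support, u n = 0)
    (f : LaurentAlg d) :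
    gpart u k (g * f) = g * gpart u k f := by
  have hrep : g = ∑ m ∈ g.coeff.support, AddMonoidAlgebra.single m (g.coeff m) := by
    conv_lhs => rw [← AddMonoidAlgebra.sum_coeff_single g]
    rfl
  conv_lhs => rw [hrep]
  conv_rhs => rw [hrep]
  rw [Finset.sum_mul, Finset.sum_mul, gpart_sum]
  exact Finset.sum_congr rfl fun m hm => gpart_single_mul u k m (hg m hm) (g.coeff m) f

lemma phi_single {h : LaurentAlg d} {φ : LaurentAlg d →ₐ[ℂ] LaurentField d}
    (hφ : IsMutationHom u h φ) (n : Fin d → ℤ) (c : ℂ) :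
    φ (AddMonoidAlgebra.single n c) =
      algebraMap (LaurentAlg d) (LaurentField d) (AddMonoidAlgebra.single n c) *
        (algebraMap (LaurentAlg d) (LaurentField d) h) ^ (u n) := by
  have h1 : AddMonoidAlgebra.single n c
      = algebraMap ℂ (LaurentAlg d) c * AddMonoidAlgebra.single n (1 : ℂ) := by
    rw [AddMonoidAlgebra.coe_algebraMap]
    simp [AddMonoidAlgebra.single_mul_single]
  rw [h1, map_mul, hφ n, AlgHom.commutes, ← mul_assoc]
  congr 1
  rw [IsScalarTower.algebraMap_apply ℂ (LaurentAlg d) (LaurentField d), ← map_mul]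

lemma phi_eq {h : LaurentAlg d} {φ : LaurentAlg d →ₐ[ℂ] LaurentField d}
    (hφ : IsMutationHom u h φ) (f : LaurentAlg d) :
    φ f = ∑ k ∈ f.coeff.support.image u,
      algebraMap (LaurentAlg d) (LaurentField d) (gpart u k f) *
        (algebraMap (LaurentAlg d) (LaurentField d) h) ^ k := by
  have hrep : f = ∑ n ∈ f.coeff.support, AddMonoidAlgebra.single n (f.coeff n) := by
    conv_lhs => rw [← AddMonoidAlgebra.sum_coeff_single f]
    rfl
  conv_lhs => rw [hrep]
  rw [map_sum,
    ← Finset.sum_fiberwise_of_maps_to (fun n hn => Finset.mem_image_of_mem u hn)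
      (fun n => φ (AddMonoidAlgebra.single n (f.coeff n)))]
  refine Finset.sum_congr rfl fun k hk => ?_
  rw [gpart_eq_sum, map_sum, Finset.sum_mul]
  refine Finset.sum_congr rfl fun n hn => ?_
  rw [phi_single u hφ]
  congr 2
  exact (Finset.mem_filter.mp hn).2

end Aux

theorem mutable_iff_divisibility (d : ℕ) (u : (Fin d → ℤ) →+ ℤ) (hu : u ≠ 0)
    (h : LaurentAlg d) (hne : h ≠ 0) (hsupp : ∀ n ∈ h.coeff.support, u n = 0)
    (φ : LaurentAlg d →ₐ[ℂ] LaurentField d) (hφ : IsMutationHom u h φ)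
    (f : LaurentAlg d) :
    (∃ a : LaurentAlg d, φ f = algebraMap (LaurentAlg d) (LaurentField d) a) ↔
      ∀ k : ℤ, 0 < k →
        h ^ k.toNat ∣ (AddMonoidAlgebra.ofCoeff (Finsupp.filter (fun n => u n = -k) f.coeff) : LaurentAlg d) := by
  have hinj : Function.Injective (algebraMap (LaurentAlg d) (LaurentField d)) :=
    IsFractionRing.injective _ _
  have hH : algebraMap (LaurentAlg d) (LaurentField d) h ≠ 0 :=
    fun hc => hne (hinj (by rw [hc, map_zero]))
  set ι := algebraMap (LaurentAlg d) (LaurentField d) with hι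
  set S := f.coeff.support.image u with hS
  constructor
  · rintro ⟨a, ha⟩ k hk
    show h ^ k.toNat ∣ gpart u (-k) f
    by_cases hkS : -k ∈ S
    · set K : ℕ := k.toNat + ∑ j ∈ S, j.natAbs with hK
      have hKle : ∀ j ∈ S, 0 ≤ j + (K : ℤ) := by
        intro j hj
        have h1 : j.natAbs ≤ ∑ i ∈ S, i.natAbs :=
          Finset.single_le_sum (fun i _ => Nat.zero_le _) hj
        omega
      have hKk : k.toNat ≤ K := by omega
      have E0 : ι (h ^ K * a) = ι (∑ j ∈ S, gpart u j f * h ^ (j + K).toNat) := by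
        rw [map_mul, ← ha, phi_eq u hφ, ← hS, map_sum, Finset.mul_sum]
        refine Finset.sum_congr rfl fun j hj => ?_
        rw [map_mul, map_pow, map_pow, mul_comm (ι h ^ K), mul_assoc]
        congr 1
        rw [← zpow_natCast (ι h) K, ← zpow_add₀ hH,
          ← zpow_natCast (ι h) (j + (K : ℤ)).toNat, Int.toNat_of_nonneg (hKle j hj)]
      have E : h ^ K * a = ∑ j ∈ S, gpart u j f * h ^ (j + K).toNat := hinj E0
      have EL : gpart u (-k) (h ^ K * a) = h ^ K * gpart u (-k) a :=
        gpart_mul u (-k) (support_pow_homog u hsupp K) a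
      have ER : gpart u (-k) (∑ j ∈ S, gpart u j f * h ^ (j + K).toNat)
          = gpart u (-k) f * h ^ ((-k) + K).toNat := by
        rw [gpart_sum]
        rw [Finset.sum_eq_single_of_mem (-k) hkS]
        · have hhom : ∀ n ∈ (gpart u (-k) f * h ^ ((-k) + K).toNat).coeff.support, u n = -k := by
            have := support_mul_homog u (j := -k) (k := 0)
              (g := gpart u (-k) f) (f := h ^ ((-k) + K).toNat)
              (fun n hn => by
                rw [gpart_support, Finset.mem_filter] at hn
                exact hn.2)
              (support_pow_homog u hsupp ((-k) + K).toNat)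
            simpa using this
          exact gpart_eq_self_of_homog u hhom
        · intro j hj hjk
          refine gpart_eq_zero_of_homog u hjk ?_
          have := support_mul_homog u (j := j) (k := 0)
            (g := gpart u j f) (f := h ^ ((j : ℤ) + K).toNat)
            (fun n hn => by
              rw [gpart_support, Finset.mem_filter] at hn
              exact hn.2)
            (support_pow_homog u hsupp ((j : ℤ) + K).toNat)
          simpa using this
      rw [E, ER] at EL
      have htn : ((-k) + (K : ℤ)).toNat = K - k.toNat := by omega
      have hKsplit : h ^ K = h ^ (K - k.toNat) * h ^ k.toNat := by
        rw [← pow_add, Nat.sub_add_cancel hKk]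
      rw [htn, hKsplit, mul_assoc] at EL
      have EL2 : h ^ (K - k.toNat) * gpart u (-k) f
          = h ^ (K - k.toNat) * (h ^ k.toNat * gpart u (-k) a) := by
        rw [← EL]; ring
      exact ⟨gpart u (-k) a, mul_left_cancel₀ (pow_ne_zero (K - k.toNat) hne) EL2⟩
    · have hz : gpart u (-k) f = 0 := by
        ext n
        rw [gpart_apply]
        split_ifs with hn
        · by_contra hc
          exact hkS (Finset.mem_image.mpr ⟨n, Finsupp.mem_support_iff.mpr hc, hn⟩)
        · rfl
      rw [hz]
      exact dvd_zero _
  · intro hdvd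
    have claim : ∀ j : ℤ, ∃ g : LaurentAlg d,
        ι (gpart u j f) * (ι h) ^ j = ι g := by
      intro j
      rcases le_or_gt 0 j with hj | hj
      · refine ⟨gpart u j f * h ^ j.toNat, ?_⟩
        rw [map_mul, map_pow, ← zpow_natCast (ι h) j.toNat, Int.toNat_of_nonneg hj]
      · obtain ⟨g, hg0⟩ := hdvd (-j) (by omega)
        rw [neg_neg] at hg0
        have hg : gpart u j f = h ^ (-j).toNat * g := hg0
        refine ⟨g, ?_⟩
        rw [hg, map_mul, map_pow, ← zpow_natCast (ι h) (-j).toNat,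
          Int.toNat_of_nonneg (by omega : (0:ℤ) ≤ -j),
          mul_comm ((ι h) ^ (-j)) (ι g), mul_assoc, ← zpow_add₀ hH, neg_add_cancel,
          zpow_zero, mul_one]
    choose g hg using claim
    refine ⟨∑ j ∈ S, g j, ?_⟩
    rw [phi_eq u hφ, ← hS, map_sum]
    exact Finset.sum_congr rfl fun j _ => hg j
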